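/- For any real τ > 0 and any α ∈ (0,1), let 𝒟^τ be the domain space of all domains over ℝⁿ satisfying the τ-Far Supports Assumption. Then OOD detection is not uniformly learnable for 𝒟^τ in 𝒫(ℝⁿ). (In particular, 𝒟^τ shatters arbitrarily large finite sets, so its VC dimension is infinite.) -/

import Mathlib

open MeasureTheory ENNReal Set Filter

noncomputable section

/-- A domain over an instance space `X` is a pair of (Borel) measures on `X`:
the ID distribution and the OOD distribution. -/
structure Domain (X : Type*) [MeasurableSpace X] where
  inD : Measure X
  outD : Measure X

namespace Domain

variable {X : Type*} [MeasurableSpace X]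

/-- Both components of the domain are probability measures. -/
def IsProb (D : Domain X) : Prop :=
  IsProbabilityMeasure D.inD ∧ IsProbabilityMeasure D.outD

/-- The risk `R^α_D(h) = (1−α)·D_in(X∖h) + α·D_out(h)` of a hypothesis `h ⊆ X`. -/
def risk (D : Domain X) (α : ℝ) (h : Set X) : ℝ≥0∞ :=
  ENNReal.ofReal (1 - α) * D.inD hᶜ + ENNReal.ofReal α * D.outD h

/-- The ID risk `R^in_D(h) = D_in(X∖h)`. -/
def inRisk (D : Domain X) (h : Set X) : ℝ≥0∞ := D.inD hᶜ

/-- The OOD risk `R^out_D(h) = D_out(h)`. -/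
def outRisk (D : Domain X) (h : Set X) : ℝ≥0∞ := D.outD h

end Domain

/-- The distribution of `N` i.i.d. samples from `μ`. -/
def iidSamples {X : Type*} [MeasurableSpace X] (μ : Measure X) (N : ℕ) :
    Measure (Fin N → X) :=
  Measure.pi fun _ => μ

/-- A (deterministic) learning algorithm: given accuracy `ε`, confidence `δ`, a sample size
and a tuple of samples, it outputs a hypothesis. -/
abbrev Learner (X : Type*) : Type _ := ℝ → ℝ → (n : ℕ) → (Fin n → X) → Set X

/-- Uniform learnability of OOD detection for the domain space `𝒟` in the hypothesis space `H`,
with a priori known OOD probability `α`: there are a sample-complexity function `N(ε,δ)` and a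
learner which, for every `ε, δ ∈ (0,1/2)` and every domain `D ∈ 𝒟`, given `N(ε,δ)` i.i.d.
samples from `D_in`, outputs with probability at least `1−δ` a hypothesis in `H` whose risk is
within `ε` of the best risk achievable in `H`. -/
def UniformlyLearnable {X : Type*} [MeasurableSpace X]
    (𝒟 : Set (Domain X)) (H : Set (Set X)) (α : ℝ) : Prop :=
  ∃ (N : ℝ → ℝ → ℕ) (A : Learner X),
    (∀ ε δ n S, A ε δ n S ∈ H) ∧
    ∀ ε δ : ℝ, 0 < ε → ε < 1/2 → 0 < δ → δ < 1/2 →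
      ∀ D ∈ 𝒟,
        ENNReal.ofReal (1 - δ) ≤
          iidSamples D.inD (N ε δ)
            {S | D.risk α (A ε δ (N ε δ) S) ≤ (⨅ h' ∈ H, D.risk α h') + ENNReal.ofReal ε}

/-- Non-uniform learnability of OOD detection: as in `UniformlyLearnable`, except that the
number of samples the learner needs may depend on the domain `D ∈ 𝒟`. -/
def NonUniformlyLearnable {X : Type*} [MeasurableSpace X]
    (𝒟 : Set (Domain X)) (H : Set (Set X)) (α : ℝ) : Prop :=
  ∃ A : Learner X,
    (∀ ε δ n S, A ε δ n S ∈ H) ∧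
    ∀ ε δ : ℝ, 0 < ε → ε < 1/2 → 0 < δ → δ < 1/2 →
      ∀ D ∈ 𝒟, ∃ N : ℕ,
        ENNReal.ofReal (1 - δ) ≤
          iidSamples D.inD N
            {S | D.risk α (A ε δ N S) ≤ (⨅ h' ∈ H, D.risk α h') + ENNReal.ofReal ε}

/-- The support of a measure on a topological space: the set of points all of whose open
neighbourhoods have positive measure. -/
def msupport {X : Type*} [MeasurableSpace X] [TopologicalSpace X] (μ : Measure X) : Set X :=
  {x | ∀ U : Set X, IsOpen U → x ∈ U → 0 < μ U}

/-- The Disjoint Supports Assumption. -/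
def Domain.DSA {X : Type*} [MeasurableSpace X] [TopologicalSpace X] (D : Domain X) : Prop :=
  msupport D.inD ∩ msupport D.outD = ∅

/-- The instance space `ℝⁿ`. -/
abbrev Euc (n : ℕ) : Type := EuclideanSpace ℝ (Fin n)

/-- The (extended) distance between two sets. -/
def setEDist {X : Type*} [PseudoEMetricSpace X] (A B : Set X) : ℝ≥0∞ :=
  ⨅ x ∈ A, EMetric.infEdist x B

/-- The `τ`-Far Supports Assumption: the supports of the ID and OOD distributions are at
distance more than `τ`. -/
def Domain.FSA {n : ℕ} (D : Domain (Euc n)) (τ : ℝ) : Prop :=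
  ENNReal.ofReal τ < setEDist (msupport D.inD) (msupport D.outD)

/-- The Bounded ID Support Assumption: the support of the ID distribution has diameter
less than `R`. -/
def Domain.BoundedID {n : ℕ} (D : Domain (Euc n)) (R : ℝ) : Prop :=
  EMetric.diam (msupport D.inD) < ENNReal.ofReal R

/-- A set `S` is shattered by a domain space `𝒟` if every subset of `S` is cut out as the trace
of the ID support of some domain in `𝒟` whose OOD support traces out the complement in `S`. -/
def DomShatters {X : Type*} [MeasurableSpace X] [TopologicalSpace X]
    (𝒟 : Set (Domain X)) (S : Set X) : Prop :=
  ∀ A ⊆ S, ∃ D ∈ 𝒟, msupport D.inD ∩ S = A ∧ msupport D.outD ∩ S = S \ A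

namespace OODAux

variable {X : Type*} [MeasurableSpace X]

lemma dirac_apply_eq [MeasurableSingletonClass X] (x : X) (E : Set X) [Decidable (x ∈ E)] :
    Measure.dirac x E = if x ∈ E then 1 else 0 := by
  split_ifs with h
  · exact Measure.dirac_apply_of_mem h
  · refine le_antisymm ?_ zero_le
    calc Measure.dirac x E ≤ Measure.dirac x {x}ᶜ :=
          measure_mono (fun y hy => by rintro rfl; exact h hy)
      _ = 0 := by
          rw [Measure.dirac_apply' _ (MeasurableSet.singleton x).compl]
          simp [Set.indicator]

lemma sum_dirac_apply [MeasurableSingletonClass X] (F : Finset X) (E : Set X)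
    [DecidablePred (· ∈ E)] :
    (∑ x ∈ F, Measure.dirac x) E = (F.filter (· ∈ E)).card := by
  rw [show ((∑ x ∈ F, Measure.dirac x) E) = ∑ x ∈ F, Measure.dirac x E by
    rw [Measure.coe_finset_sum]; exact Finset.sum_apply E F _]
  rw [Finset.card_filter]
  push_cast
  exact Finset.sum_congr rfl fun x _ => dirac_apply_eq x E

lemma smul_sum_dirac_apply [MeasurableSingletonClass X] (F : Finset X) (a : ℝ≥0∞) (E : Set X)
    [DecidablePred (· ∈ E)] :
    (a • ∑ x ∈ F, Measure.dirac x) E = a * (F.filter (· ∈ E)).card := by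
  rw [Measure.smul_apply, smul_eq_mul, sum_dirac_apply]

/-- uniform measure on a finite set -/
def unifOn (F : Finset X) : Measure X :=
  (F.card : ℝ≥0∞)⁻¹ • ∑ x ∈ F, Measure.dirac x

lemma unifOn_apply [MeasurableSingletonClass X] (F : Finset X) (E : Set X)
    [DecidablePred (· ∈ E)] :
    unifOn F E = (F.card : ℝ≥0∞)⁻¹ * (F.filter (· ∈ E)).card :=
  smul_sum_dirac_apply F _ E

lemma unifOn_prob [MeasurableSingletonClass X] {F : Finset X} (hF : F.Nonempty) :
    IsProbabilityMeasure (unifOn F) := by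
  classical
  constructor
  rw [unifOn_apply]
  simp only [Set.mem_univ, Finset.filter_true_of_mem fun _ _ => trivial]
  rw [ENNReal.inv_mul_cancel]
  · exact_mod_cast Finset.card_ne_zero_of_mem hF.choose_spec
  · exact ENNReal.natCast_ne_top _

instance unifOn_finite [MeasurableSingletonClass X] (F : Finset X) :
    IsFiniteMeasure (unifOn F) := by
  classical
  constructor
  rw [unifOn_apply]
  rcases Finset.eq_empty_or_nonempty F with rfl | hF
  · simp
  · exact ENNReal.mul_lt_top
      (ENNReal.inv_lt_top.2 (by exact_mod_cast Finset.card_pos.2 hF))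
      (ENNReal.natCast_lt_top _)

lemma unifOn_coe_compl [MeasurableSingletonClass X] (F : Finset X) :
    unifOn F ((↑F : Set X)ᶜ) = 0 := by
  classical
  rw [unifOn_apply]
  convert mul_zero _
  norm_cast
  rw [Finset.card_eq_zero, Finset.filter_eq_empty_iff]
  intro a ha hc
  exact hc (Finset.mem_coe.mpr ha)

lemma unifOn_singleton (x : X) : unifOn {x} = Measure.dirac x := by
  simp [unifOn]

lemma msupport_unifOn [TopologicalSpace X] [OpensMeasurableSpace X] [T1Space X]
    [MeasurableSingletonClass X] (F : Finset X) :
    msupport (unifOn F) = ↑F := by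
  classical
  ext x
  constructor
  · intro hx
    by_contra hxF
    have h0 : unifOn F ((↑F : Set X)ᶜ) = 0 := unifOn_coe_compl F
    have := hx ((↑F : Set X)ᶜ) (F.finite_toSet.isClosed.isOpen_compl) hxF
    rw [h0] at this
    exact lt_irrefl 0 this
  · intro hx U hU hxU
    rw [unifOn_apply]
    apply ENNReal.mul_pos
    · simp only [ne_eq, ENNReal.inv_eq_zero]
      exact ENNReal.natCast_ne_top _
    · have : x ∈ F.filter (· ∈ U) := Finset.mem_filter.2 ⟨hx, hxU⟩
      exact_mod_cast Finset.card_ne_zero_of_mem this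

lemma iidSamples_unifOn [MeasurableSingletonClass X] (F : Finset X) (N : ℕ) :
    iidSamples (unifOn F) N =
      ((F.card : ℝ≥0∞) ^ N)⁻¹ •
        ∑ s ∈ Fintype.piFinset (fun _ : Fin N => F), Measure.dirac s := by
  classical
  refine (Measure.pi_eq fun t ht => ?_)
  rw [Measure.smul_apply, smul_eq_mul,
    show ((∑ s ∈ Fintype.piFinset (fun _ : Fin N => F), Measure.dirac s) (Set.pi Set.univ t))
      = ∑ s ∈ Fintype.piFinset (fun _ : Fin N => F), Measure.dirac s (Set.pi Set.univ t) by
      rw [Measure.coe_finset_sum]; exact Finset.sum_apply _ _ _]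
  have hdir : ∀ s : Fin N → X, Measure.dirac s (Set.pi Set.univ t)
      = ∏ i, (if s i ∈ t i then (1:ℝ≥0∞) else 0) := by
    intro s
    by_cases hs : s ∈ Set.pi Set.univ t
    · rw [Measure.dirac_apply_of_mem hs]
      rw [Set.mem_univ_pi] at hs
      simp [hs]
    · rw [Measure.dirac_apply' _ (MeasurableSet.univ_pi ht),
        Set.indicator_of_notMem hs]
      rw [Set.mem_univ_pi] at hs
      push_neg at hs
      obtain ⟨i, hi⟩ := hs
      exact (Finset.prod_eq_zero (Finset.mem_univ i) (by simp [hi])).symm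
  simp only [hdir]
  rw [← Finset.prod_univ_sum (fun _ : Fin N => F)
    (fun i (x : X) => if x ∈ t i then (1:ℝ≥0∞) else 0)]
  have : ∀ i : Fin N, (∑ x ∈ F, if x ∈ t i then (1:ℝ≥0∞) else 0)
      = (F.filter (· ∈ t i)).card := by
    intro i
    rw [Finset.card_filter]; push_cast; rfl
  simp only [this]
  rw [Finset.prod_congr rfl fun i _ => unifOn_apply F (t i)]
  rw [Finset.prod_mul_distrib]
  simp [ENNReal.inv_pow]

/-- separated points on a line in ℝⁿ -/
def pt (n : ℕ) (hn : 0 < n) (c : ℝ) (i : ℕ) : Euc n :=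
  EuclideanSpace.single ⟨0, hn⟩ (c * i)

lemma pt_edist {n : ℕ} (hn : 0 < n) {c : ℝ} (hc : 0 < c) {i j : ℕ} (hij : i ≠ j) :
    ENNReal.ofReal c ≤ edist (pt n hn c i) (pt n hn c j) := by
  rw [pt, pt, EuclideanSpace.edist_single_same, edist_dist, Real.dist_eq]
  apply ENNReal.ofReal_le_ofReal
  rw [← mul_sub, abs_mul, abs_of_pos hc]
  have h1 : (1:ℝ) ≤ |(i:ℝ) - j| := by
    have h2 : (1:ℝ) ≤ |(i:ℤ) - (j:ℤ)| := by
      have : (i:ℤ) - j ≠ 0 := sub_ne_zero.2 (by exact_mod_cast hij)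
      exact_mod_cast Int.one_le_abs (by exact_mod_cast this)
    calc (1:ℝ) ≤ |((i:ℤ) - (j:ℤ) : ℤ)| := by exact_mod_cast h2
      _ = |(i:ℝ) - j| := by push_cast; ring_nf
  nlinarith

lemma pt_injective {n : ℕ} (hn : 0 < n) {c : ℝ} (hc : 0 < c) :
    Function.Injective (pt n hn c) := by
  intro i j h
  by_contra hij
  have := pt_edist hn hc hij
  rw [h, edist_self] at this
  simp only [nonpos_iff_eq_zero, ENNReal.ofReal_eq_zero] at this
  linarith

lemma setEDist_lower {n : ℕ} (hn : 0 < n) {c : ℝ} (hc : 0 < c)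
    {A B : Set (Euc n)} (hA : A ⊆ Set.range (pt n hn c)) (hB : B ⊆ Set.range (pt n hn c))
    (hd : Disjoint A B) : ENNReal.ofReal c ≤ setEDist A B := by
  rw [setEDist]
  refine le_iInf₂ fun x hx => ?_
  refine EMetric.le_infEdist.2 ?_
  intro y hy
  obtain ⟨i, rfl⟩ := hA hx
  obtain ⟨j, rfl⟩ := hB hy
  refine pt_edist hn hc fun hij => ?_
  subst hij
  exact (hd.ne_of_mem hx hy) rfl

lemma fsa_of_parts {n : ℕ} (hn : 0 < n) {τ : ℝ} (hτ : 0 < τ)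
    {A B : Set (Euc n)} (hA : A ⊆ Set.range (pt n hn (τ+1))) (hB : B ⊆ Set.range (pt n hn (τ+1)))
    (hd : Disjoint A B) : ENNReal.ofReal τ < setEDist A B :=
  lt_of_lt_of_le ((ENNReal.ofReal_lt_ofReal_iff (by linarith)).2 (by linarith))
    (setEDist_lower hn (by linarith) hA hB hd)

lemma bern (x : ℝ) (hx : 0 ≤ x) : ∀ K : ℕ, 2*K*x ≤ 1 → (1+x)^K ≤ 1+2*K*x := by
  intro K
  induction K with
  | zero => simp
  | succ K ih =>
    intro h
    have hK : 2*K*x ≤ 1 := by push_cast at h ⊢; nlinarith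
    calc (1+x)^(K+1) = (1+x)^K * (1+x) := pow_succ _ _
      _ ≤ (1+2*K*x) * (1+x) := by
          apply mul_le_mul_of_nonneg_right (ih hK) (by linarith)
      _ ≤ 1+2*(K+1:ℕ)*x := by push_cast; nlinarith

lemma enn_helper1 {x y : ℝ≥0∞} (hx0 : x ≠ 0) (hxt : x ≠ ⊤)
    (h : ENNReal.ofReal (3/4) ≤ x⁻¹ * y) : 3 * x ≤ 4 * y := by
  have h4 : (ENNReal.ofReal (3/4)) * 4 = 3 := by
    rw [← ENNReal.ofReal_ofNat 4, ← ENNReal.ofReal_mul (by norm_num : (0:ℝ) ≤ 3/4)]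
    norm_num
  calc 3 * x = ENNReal.ofReal (3/4) * 4 * x := by rw [h4]
    _ ≤ (x⁻¹ * y) * 4 * x := by
        exact mul_le_mul_left (mul_le_mul_left h 4) x
    _ = 4 * y * (x⁻¹ * x) := by ring
    _ = 4 * y := by rw [ENNReal.inv_mul_cancel hx0 hxt, mul_one]

lemma enn_helper2 {m' k : ℝ≥0∞} (hm0 : m' ≠ 0) (hmt : m' ≠ ⊤)
    (h : m'⁻¹ * k ≤ 4⁻¹) : 4 * k ≤ m' := by
  calc 4 * k = 4 * ((m' * m'⁻¹) * k) := by
        rw [ENNReal.mul_inv_cancel hm0 hmt, one_mul]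
    _ = 4 * (m' * (m'⁻¹ * k)) := by ring
    _ ≤ 4 * (m' * 4⁻¹) := mul_le_mul_right (mul_le_mul_right h m') 4
    _ = m' * (4 * 4⁻¹) := by ring
    _ = m' := by rw [ENNReal.mul_inv_cancel (by norm_num) (by norm_num), mul_one]

lemma ofReal_div4 (a : ℝ) (ha : 0 ≤ a) :
    ENNReal.ofReal (a/4) = ENNReal.ofReal a * 4⁻¹ := by
  rw [div_eq_mul_inv, ENNReal.ofReal_mul ha]
  congr 1
  rw [← ENNReal.ofReal_ofNat 4, ← ENNReal.ofReal_inv_of_pos (by norm_num)]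

end OODAux
/-- **τ-FSA does not imply uniform learnability.** The space `𝒟^τ` of all domains over `ℝⁿ`
whose ID and OOD supports are more than `τ` apart shatters arbitrarily large finite sets
(so it has infinite VC dimension), and OOD detection is not uniformly learnable for it. -/
theorem fsa_not_uniformly_learnable
    (n : ℕ) (hn : 1 ≤ n) (τ : ℝ) (hτ : 0 < τ) (α : ℝ) (hα : α ∈ Set.Ioo (0 : ℝ) 1) :
    (∀ k : ℕ, ∃ S : Finset (Euc n), S.card = k ∧
      DomShatters {D : Domain (Euc n) | D.IsProb ∧ D.FSA τ} ↑S) ∧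
    ¬ UniformlyLearnable {D : Domain (Euc n) | D.IsProb ∧ D.FSA τ} Set.univ α := by
  classical
  have hn' : 0 < n := hn
  have hc : (0:ℝ) < τ + 1 := by linarith
  constructor
  · -- Shattering
    intro k
    set pts := OODAux.pt n hn' (τ+1) with hpts
    set S : Finset (Euc n) := (Finset.range k).image pts with hSdef
    have hSr : (↑S : Set (Euc n)) ⊆ Set.range pts := by
      intro x hx
      rw [hSdef, Finset.coe_image] at hx
      rcases hx with ⟨i, _, rfl⟩
      exact ⟨i, rfl⟩
    have hnotS : ∀ j : ℕ, k ≤ j → pts j ∉ (↑S : Set (Euc n)) := by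
      intro j hj hmem
      rw [hSdef, Finset.coe_image] at hmem
      rcases hmem with ⟨i, hi, hip⟩
      have : i = j := OODAux.pt_injective hn' hc hip
      rw [Finset.coe_range, Set.mem_Iio] at hi
      omega
    refine ⟨S, ?_, ?_⟩
    · rw [hSdef, Finset.card_image_of_injective _ (OODAux.pt_injective hn' hc),
        Finset.card_range]
    · intro A hA
      have hfin : A.Finite := S.finite_toSet.subset hA
      set FA := hfin.toFinset with hFAdef
      have hFAco : (↑FA : Set (Euc n)) = A := hfin.coe_toFinset
      set p1 := pts k with hp1def
      set p2 := pts (k+1) with hp2def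
      have hp1 : p1 ∉ (↑S : Set (Euc n)) := hnotS k le_rfl
      have hp2 : p2 ∉ (↑S : Set (Euc n)) := hnotS (k+1) (by omega)
      have hp12 : p1 ≠ p2 := fun h => by
        have := OODAux.pt_injective hn' hc h; omega
      refine ⟨⟨OODAux.unifOn (insert p1 FA), OODAux.unifOn (insert p2 (S \ FA))⟩,
        ⟨⟨OODAux.unifOn_prob (Finset.insert_nonempty _ _),
          OODAux.unifOn_prob (Finset.insert_nonempty _ _)⟩, ?_⟩, ?_, ?_⟩
      · -- FSA
        show ENNReal.ofReal τ < setEDist (msupport (OODAux.unifOn (insert p1 FA)))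
          (msupport (OODAux.unifOn (insert p2 (S \ FA))))
        rw [OODAux.msupport_unifOn, OODAux.msupport_unifOn,
          Finset.coe_insert, Finset.coe_insert, Finset.coe_sdiff, hFAco]
        apply OODAux.fsa_of_parts hn' hτ
        · exact Set.insert_subset ⟨k, rfl⟩ ((hA.trans hSr))
        · exact Set.insert_subset ⟨k+1, rfl⟩ ((Set.diff_subset.trans hSr))
        · rw [Set.disjoint_left]
          intro x hx1 hx2
          simp only [Set.mem_insert_iff] at hx1 hx2
          rcases hx1 with h1 | hxA <;> rcases hx2 with h2 | hxB
          · exact hp12 (h1.symm.trans h2)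
          · exact hp1 (by rw [← h1]; exact hxB.1)
          · exact hp2 (by rw [← h2]; exact hA hxA)
          · exact hxB.2 hxA
      · -- in-support trace
        show msupport (OODAux.unifOn (insert p1 FA)) ∩ ↑S = A
        rw [OODAux.msupport_unifOn, Finset.coe_insert,
          Set.insert_inter_of_notMem hp1, hFAco, Set.inter_eq_left.mpr hA]
      · -- out-support trace
        show msupport (OODAux.unifOn (insert p2 (S \ FA))) ∩ ↑S = ↑S \ A
        rw [OODAux.msupport_unifOn, Finset.coe_insert,
          Set.insert_inter_of_notMem hp2, Finset.coe_sdiff, hFAco,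
          Set.inter_eq_left.mpr Set.diff_subset]
  · -- Non-learnability
    rintro ⟨Nf, Alg, -, hlearn⟩
    have hα0 : (0:ℝ) < α := hα.1
    have hα1 : α < 1 := hα.2
    set β := min α (1 - α) with hβ
    have hβpos : 0 < β := lt_min hα0 (by linarith)
    have hβα : β ≤ α := min_le_left _ _
    have hβ1α : β ≤ 1 - α := min_le_right _ _
    set ε := β / 4 with hεdef
    have hε1 : 0 < ε := by positivity
    have hε2 : ε < 1/2 := by
      have : β ≤ α := hβα
      simp only [hεdef]; linarith
    have hεα : ε < α := by simp only [hεdef]; linarith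
    have hε1α : ε ≤ (1-α)/4 := by simp only [hεdef]; linarith
    have hεα' : ENNReal.ofReal ε < ENNReal.ofReal α :=
      (ENNReal.ofReal_lt_ofReal_iff hα0).2 hεα
    set K := Nf ε (1/4) with hK
    set m := 4 * K + 4 with hm
    set pts := OODAux.pt n hn' (τ+1) with hpts
    set G : Finset (Euc n) := (Finset.range (m+1)).image pts with hG
    have hGcard : G.card = m + 1 := by
      rw [hG, Finset.card_image_of_injective _ (OODAux.pt_injective hn' hc),
        Finset.card_range]
    have hGr : (↑G : Set (Euc n)) ⊆ Set.range pts := by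
      intro x hx
      rw [hG, Finset.coe_image] at hx
      rcases hx with ⟨i, _, rfl⟩
      exact ⟨i, rfl⟩
    have hcardE : ∀ q ∈ G, (G.erase q).card = m := by
      intro q hq
      rw [Finset.card_erase_of_mem hq, hGcard]
      omega
    have hm0 : (m:ℝ≥0∞) ≠ 0 := by
      simp only [ne_eq, Nat.cast_eq_zero]; omega
    have hmt : (m:ℝ≥0∞) ≠ ⊤ := ENNReal.natCast_ne_top m
    -- the key per-domain estimate
    have hkey : ∀ q ∈ G, 3 * m ^ K ≤
        4 * ((Fintype.piFinset fun _ : Fin K => G.erase q).filter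
          (· ∈ {S : Fin K → Euc n |
            (Domain.mk (OODAux.unifOn (G.erase q)) (OODAux.unifOn {q})).risk α
              (Alg ε (1/4) K S) ≤ ENNReal.ofReal ε})).card := by
      intro q hq
      have hne1 : (G.erase q).Nonempty := by
        rw [← Finset.card_pos, hcardE q hq]; omega
      have hDmem : (⟨OODAux.unifOn (G.erase q), OODAux.unifOn {q}⟩ : Domain (Euc n)) ∈
          {D : Domain (Euc n) | D.IsProb ∧ D.FSA τ} := by
        constructor
        · exact ⟨OODAux.unifOn_prob hne1, OODAux.unifOn_prob (Finset.singleton_nonempty q)⟩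
        · show ENNReal.ofReal τ < setEDist (msupport (OODAux.unifOn (G.erase q)))
            (msupport (OODAux.unifOn {q}))
          rw [OODAux.msupport_unifOn, OODAux.msupport_unifOn, Finset.coe_singleton]
          apply OODAux.fsa_of_parts hn' hτ
          · exact fun x hx => hGr (Finset.mem_coe.mpr (Finset.erase_subset _ _
              (Finset.mem_coe.mp hx)))
          · exact Set.singleton_subset_iff.2 (hGr hq)
          · rw [Set.disjoint_left]
            intro x hx hx2
            rw [Set.mem_singleton_iff] at hx2
            exact (Finset.mem_erase.1 (Finset.mem_coe.mp hx)).1 hx2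
      have hle := hlearn ε (1/4) hε1 hε2 (by norm_num) (by norm_num)
        ⟨OODAux.unifOn (G.erase q), OODAux.unifOn {q}⟩ hDmem
      rw [← hK] at hle
      dsimp only at hle
      have hzero : (⟨OODAux.unifOn (G.erase q), OODAux.unifOn {q}⟩ : Domain (Euc n)).risk α
          ↑(G.erase q) = 0 := by
        show ENNReal.ofReal (1-α) * (OODAux.unifOn (G.erase q)) ((↑(G.erase q) : Set (Euc n))ᶜ)
          + ENNReal.ofReal α * (OODAux.unifOn {q}) ↑(G.erase q) = 0
        rw [OODAux.unifOn_coe_compl, mul_zero, zero_add, OODAux.unifOn_singleton]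
        convert mul_zero _
        rw [OODAux.dirac_apply_eq, if_neg]
        intro hmem
        exact (Finset.notMem_erase q G) (Finset.mem_coe.mp hmem)
      have hinf0 : (⨅ h' ∈ (Set.univ : Set (Set (Euc n))),
          (⟨OODAux.unifOn (G.erase q), OODAux.unifOn {q}⟩ : Domain (Euc n)).risk α h') = 0 :=
        le_antisymm (le_trans (iInf₂_le _ (Set.mem_univ _)) hzero.le) zero_le
      rw [hinf0, zero_add] at hle
      rw [OODAux.iidSamples_unifOn, OODAux.smul_sum_dirac_apply, hcardE q hq] at hle
      rw [show (1 - 1/4 : ℝ) = 3/4 by norm_num] at hle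
      have h1 := OODAux.enn_helper1 (pow_ne_zero K hm0) (ENNReal.pow_ne_top hmt) hle
      exact_mod_cast h1
    -- the combinatorial upper bound
    set P := Fintype.piFinset (fun _ : Fin K => G) with hP
    have hPsub : ∀ q : Euc n,
        Fintype.piFinset (fun _ : Fin K => G.erase q) ⊆ P := by
      intro q s hs
      rw [Fintype.mem_piFinset] at hs
      rw [hP, Fintype.mem_piFinset]
      exact fun i => Finset.erase_subset _ _ (hs i)
    have hper : ∀ s ∈ P, (G.filter (fun q =>
        s ∈ Fintype.piFinset (fun _ : Fin K => G.erase q) ∧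
        s ∈ {S : Fin K → Euc n |
            (Domain.mk (OODAux.unifOn (G.erase q)) (OODAux.unifOn {q})).risk α
              (Alg ε (1/4) K S) ≤ ENNReal.ofReal ε})).card ≤ K + 2 := by
      intro s _
      set F := G.filter (fun q =>
        s ∈ Fintype.piFinset (fun _ : Fin K => G.erase q) ∧
        s ∈ {S : Fin K → Euc n |
            (Domain.mk (OODAux.unifOn (G.erase q)) (OODAux.unifOn {q})).risk α
              (Alg ε (1/4) K S) ≤ ENNReal.ofReal ε}) with hF
      rcases Finset.eq_empty_or_nonempty F with hFe | ⟨q₀, hq₀⟩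
      · rw [hFe]; simp
      have hq₀' := Finset.mem_filter.1 (hF ▸ hq₀)
      obtain ⟨hq₀G, -, hq₀good⟩ := hq₀'
      have hgood0 : ENNReal.ofReal (1-α) *
            OODAux.unifOn (G.erase q₀) ((Alg ε (1/4) K s)ᶜ)
          + ENNReal.ofReal α * OODAux.unifOn {q₀} (Alg ε (1/4) K s)
          ≤ ENNReal.ofReal ε := hq₀good
      have hnotin : ∀ q' ∈ F, q' ∉ Alg ε (1/4) K s := by
        intro q' hq'
        have hg := (Finset.mem_filter.1 (hF ▸ hq')).2.2
        have hg2 : ENNReal.ofReal (1-α) *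
              OODAux.unifOn (G.erase q') ((Alg ε (1/4) K s)ᶜ)
            + ENNReal.ofReal α * OODAux.unifOn {q'} (Alg ε (1/4) K s)
            ≤ ENNReal.ofReal ε := hg
        intro hmem
        have h3 : ENNReal.ofReal α * OODAux.unifOn {q'} (Alg ε (1/4) K s)
            ≤ ENNReal.ofReal ε := le_trans (self_le_add_left _ _) hg2
        rw [OODAux.unifOn_singleton, Measure.dirac_apply_of_mem hmem, mul_one] at h3
        exact absurd h3 (not_le.2 hεα')
      have hIn : ENNReal.ofReal (1-α) *
          OODAux.unifOn (G.erase q₀) ((Alg ε (1/4) K s)ᶜ) ≤ ENNReal.ofReal ε :=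
        le_trans (self_le_add_right _ _) hgood0
      rw [OODAux.unifOn_apply, hcardE q₀ hq₀G] at hIn
      have h14 : ENNReal.ofReal ε ≤ ENNReal.ofReal (1-α) * 4⁻¹ := by
        rw [← OODAux.ofReal_div4 (1-α) (by linarith)]
        exact ENNReal.ofReal_le_ofReal hε1α
      have hcan : ((m:ℝ≥0∞))⁻¹ *
          ((G.erase q₀).filter (· ∈ (Alg ε (1/4) K s)ᶜ)).card ≤ 4⁻¹ :=
        (ENNReal.mul_le_mul_iff_right
          (by simp only [ne_eq, ENNReal.ofReal_eq_zero, not_le]; linarith)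
          ENNReal.ofReal_ne_top).1 (le_trans hIn h14)
      have h4k := OODAux.enn_helper2 hm0 hmt hcan
      have hkN : 4 * ((G.erase q₀).filter (· ∈ (Alg ε (1/4) K s)ᶜ)).card ≤ m := by
        exact_mod_cast h4k
      have hsub : F ⊆ insert q₀ ((G.erase q₀).filter (· ∈ (Alg ε (1/4) K s)ᶜ)) := by
        intro q' hq'
        by_cases hqq : q' = q₀
        · rw [hqq]; exact Finset.mem_insert_self _ _
        · refine Finset.mem_insert_of_mem (Finset.mem_filter.2
            ⟨Finset.mem_erase.2 ⟨hqq, (Finset.mem_filter.1 (hF ▸ hq')).1⟩, ?_⟩)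
          exact hnotin q' hq'
      calc F.card ≤ (insert q₀ ((G.erase q₀).filter (· ∈ (Alg ε (1/4) K s)ᶜ))).card :=
            Finset.card_le_card hsub
        _ ≤ ((G.erase q₀).filter (· ∈ (Alg ε (1/4) K s)ᶜ)).card + 1 :=
            Finset.card_insert_le _ _
        _ ≤ K + 2 := by omega
    -- put the two together
    have hstep1 : ∀ q ∈ G,
        ((Fintype.piFinset fun _ : Fin K => G.erase q).filter
          (· ∈ {S : Fin K → Euc n |
            (Domain.mk (OODAux.unifOn (G.erase q)) (OODAux.unifOn {q})).risk α
              (Alg ε (1/4) K S) ≤ ENNReal.ofReal ε})).card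
        = ∑ s ∈ P, if s ∈ Fintype.piFinset (fun _ : Fin K => G.erase q) ∧
            s ∈ {S : Fin K → Euc n |
            (Domain.mk (OODAux.unifOn (G.erase q)) (OODAux.unifOn {q})).risk α
              (Alg ε (1/4) K S) ≤ ENNReal.ofReal ε} then 1 else 0 := by
      intro q _
      rw [Finset.card_filter]
      rw [Finset.sum_congr rfl (fun s hs => if_congr (and_iff_right hs).symm rfl rfl)]
      exact Finset.sum_subset (hPsub q) (fun x _ hx => if_neg (fun hcon => hx hcon.1))
    have hcomb : ∑ q ∈ G,
        ((Fintype.piFinset fun _ : Fin K => G.erase q).filter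
          (· ∈ {S : Fin K → Euc n |
            (Domain.mk (OODAux.unifOn (G.erase q)) (OODAux.unifOn {q})).risk α
              (Alg ε (1/4) K S) ≤ ENNReal.ofReal ε})).card
        ≤ (K + 2) * (m+1)^K := by
      rw [Finset.sum_congr rfl hstep1, Finset.sum_comm]
      have : ∀ s ∈ P, (∑ q ∈ G, if s ∈ Fintype.piFinset (fun _ : Fin K => G.erase q) ∧
            s ∈ {S : Fin K → Euc n |
            (Domain.mk (OODAux.unifOn (G.erase q)) (OODAux.unifOn {q})).risk α
              (Alg ε (1/4) K S) ≤ ENNReal.ofReal ε} then 1 else 0) ≤ K + 2 := by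
        intro s hs
        rw [← Finset.card_filter]
        exact hper s hs
      calc (∑ s ∈ P, ∑ q ∈ G, if s ∈ Fintype.piFinset (fun _ : Fin K => G.erase q) ∧
            s ∈ {S : Fin K → Euc n |
            (Domain.mk (OODAux.unifOn (G.erase q)) (OODAux.unifOn {q})).risk α
              (Alg ε (1/4) K S) ≤ ENNReal.ofReal ε} then 1 else 0)
          ≤ ∑ s ∈ P, (K+2) := Finset.sum_le_sum this
        _ = P.card * (K+2) := by rw [Finset.sum_const, smul_eq_mul]
        _ = (m+1)^K * (K+2) := by
            rw [hP, Fintype.card_piFinset]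
            simp [hGcard]
        _ = (K+2) * (m+1)^K := Nat.mul_comm _ _
    have htot : 3 * (m+1) * m^K ≤ 4 * ((K + 2) * (m+1)^K) := by
      calc 3 * (m+1) * m^K = ∑ _q ∈ G, 3 * m^K := by
            rw [Finset.sum_const, hGcard, smul_eq_mul]; ring
        _ ≤ ∑ q ∈ G, 4 * ((Fintype.piFinset fun _ : Fin K => G.erase q).filter
            (· ∈ {S : Fin K → Euc n |
              (Domain.mk (OODAux.unifOn (G.erase q)) (OODAux.unifOn {q})).risk α
                (Alg ε (1/4) K S) ≤ ENNReal.ofReal ε})).card :=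
            Finset.sum_le_sum hkey
        _ = 4 * ∑ q ∈ G, ((Fintype.piFinset fun _ : Fin K => G.erase q).filter
            (· ∈ {S : Fin K → Euc n |
              (Domain.mk (OODAux.unifOn (G.erase q)) (OODAux.unifOn {q})).risk α
                (Alg ε (1/4) K S) ≤ ENNReal.ofReal ε})).card := by
            rw [Finset.mul_sum]
        _ ≤ 4 * ((K + 2) * (m+1)^K) := Nat.mul_le_mul_left _ hcomb
    -- final arithmetic contradiction
    have hmr : (m:ℝ) = 4*(K:ℝ)+4 := by rw [hm]; push_cast; ring
    have hmpos : (0:ℝ) < m := by rw [hmr]; positivity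
    have hKr : (0:ℝ) ≤ (K:ℝ) := Nat.cast_nonneg K
    have h2K : 2*(K:ℝ)*(1/m) ≤ 1 := by
      rw [mul_one_div, div_le_one hmpos]; linarith
    have hbern := OODAux.bern (1/(m:ℝ)) (by positivity) K h2K
    have hb : ((m:ℝ)+1)^K ≤ (3/2) * (m:ℝ)^K := by
      have he : ((m:ℝ)+1) = m * (1+1/m) := by field_simp
      rw [he, mul_pow]
      have h2 : 1 + 2*(K:ℝ)*(1/m) ≤ 3/2 := by
        have h3 : 2*(K:ℝ)*(1/m) ≤ 1/2 := by
          rw [mul_one_div, div_le_iff₀ hmpos]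
          linarith
        linarith
      calc (m:ℝ)^K * (1+1/m)^K ≤ (m:ℝ)^K * (3/2) :=
            mul_le_mul_of_nonneg_left (le_trans hbern h2) (by positivity)
        _ = 3/2 * (m:ℝ)^K := by ring
    have hcast : (3:ℝ) * ((m:ℝ)+1) * (m:ℝ)^K ≤ 4 * (((K:ℝ) + 2) * ((m:ℝ)+1)^K) := by
      exact_mod_cast htot
    have hpow : (0:ℝ) < (m:ℝ)^K := by positivity
    have hb4 : 4*(((K:ℝ)+2) * ((m:ℝ)+1)^K) ≤ 4*(((K:ℝ)+2) * ((3/2) * (m:ℝ)^K)) := by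
      have : (0:ℝ) ≤ (K:ℝ)+2 := by linarith
      nlinarith
    have h5 : (3:ℝ)*((m:ℝ)+1)*(m:ℝ)^K ≤ (6*(K:ℝ)+12) * (m:ℝ)^K := by
      calc (3:ℝ)*((m:ℝ)+1)*(m:ℝ)^K ≤ 4*(((K:ℝ)+2) * ((3/2) * (m:ℝ)^K)) :=
            le_trans hcast hb4
        _ = (6*(K:ℝ)+12) * (m:ℝ)^K := by ring
    have h6 : (3:ℝ)*((m:ℝ)+1) = 12*(K:ℝ)+15 := by rw [hmr]; ring
    rw [h6] at h5
    have h7 : (12*(K:ℝ)+15) ≤ 6*(K:ℝ)+12 := le_of_mul_le_mul_right h5 hpow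
    linarith
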